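/- Let S ⊆ ℝⁿ be a nonempty closed convex set and let 𝒜 : ℝⁿ → ℝⁿ be pseudo-monotone. Let x* ∈ S satisfy ⟨𝒜(x*), z − x*⟩ ≥ 0 for all z ∈ S. Let x ∈ ℝⁿ, λ > 0, μ ∈ (0,1), and γ ∈ (0,2). Set y = P_S(x − λ𝒜(x)), assume x ≠ y and λ‖𝒜(x) − 𝒜(y)‖ ≤ μ‖x − y‖, and define d = x − y − λ(𝒜(x) − 𝒜(y)), ρ = ⟨x − y, d⟩/‖d‖², and x⁺ = P_S(x − γλρ𝒜(y)). Then ‖x⁺ − x*‖ ≤ ‖x − x*‖. -/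

import Mathlib

open RealInnerProductSpace

lemma proj_var_ineq {E : Type*} [NormedAddCommGroup E] [InnerProductSpace ℝ E]
    {S : Set E} (hScv : Convex ℝ S) {u v : E} (hv : v ∈ S)
    (h : ∀ w ∈ S, ‖u - v‖ ≤ ‖u - w‖) : ∀ w ∈ S, ⟪u - v, w - v⟫ ≤ 0 := by
  rw [← norm_eq_iInf_iff_real_inner_le_zero hScv hv]
  haveI : Nonempty S := ⟨⟨v, hv⟩⟩
  refine le_antisymm (le_ciInf fun w => h w w.2) ?_
  exact ciInf_le ⟨0, fun r ⟨w, hw⟩ => hw ▸ norm_nonneg _⟩ (⟨v, hv⟩ : S)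

lemma id1 {E : Type*} [NormedAddCommGroup E] [InnerProductSpace ℝ E] (a b c : E) :
    ‖a - c‖^2 = ‖b - c‖^2 - ‖b - a‖^2 + 2 * ⟪b - a, c - a⟫ := by
  simp only [← real_inner_self_eq_norm_sq, inner_sub_left, inner_sub_right]
  ring_nf
  simp [real_inner_comm]
  ring

lemma exp1 {E : Type*} [NormedAddCommGroup E] [InnerProductSpace ℝ E] (u v w : E) (s : ℝ) :
    ‖u - s•v - w‖^2 = ‖u - w‖^2 - 2*s*⟪v, u - w⟫ + s^2*‖v‖^2 := by
  have h : u - s•v - w = (u - w) - s•v := by abel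
  rw [h, norm_sub_sq_real, real_inner_smul_right, norm_smul, mul_pow, real_inner_comm]
  simp [sq_abs]
  ring

set_option maxHeartbeats 1000000 in
theorem stmt_8 {n : ℕ} (S : Set (EuclideanSpace ℝ (Fin n)))
    (hSne : S.Nonempty) (hScl : IsClosed S) (hScv : Convex ℝ S)
    (A : EuclideanSpace ℝ (Fin n) → EuclideanSpace ℝ (Fin n))
    (hpm : ∀ a b : EuclideanSpace ℝ (Fin n),
      (0 : ℝ) ≤ inner ℝ (A a) (b - a) → (0 : ℝ) ≤ inner ℝ (A b) (b - a))
    (xs : EuclideanSpace ℝ (Fin n)) (hxsS : xs ∈ S)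
    (hxs : ∀ z ∈ S, (0 : ℝ) ≤ inner ℝ (A xs) (z - xs))
    (x y xp : EuclideanSpace ℝ (Fin n))
    (lam μ γ : ℝ) (hlam : 0 < lam) (hμ0 : 0 < μ) (hμ1 : μ < 1)
    (hγ0 : 0 < γ) (hγ2 : γ < 2)
    (hyS : y ∈ S) (hyproj : ∀ w ∈ S, ‖x - lam • A x - y‖ ≤ ‖x - lam • A x - w‖)
    (hxy : x ≠ y)
    (hls : lam * ‖A x - A y‖ ≤ μ * ‖x - y‖)
    (d : EuclideanSpace ℝ (Fin n)) (hd : d = x - y - lam • (A x - A y))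
    (ρ : ℝ) (hρ : ρ = (inner ℝ (x - y) d : ℝ) / ‖d‖ ^ 2)
    (hxpS : xp ∈ S)
    (hxpproj : ∀ w ∈ S,
      ‖x - (γ * lam * ρ) • A y - xp‖ ≤ ‖x - (γ * lam * ρ) • A y - w‖) :
    ‖xp - xs‖ ≤ ‖x - xs‖ := by
  have hproj1 := proj_var_ineq hScv hyS hyproj
  have hproj2 := proj_var_ineq hScv hxpS hxpproj
  have hQ : (0 : ℝ) ≤ ⟪A y, y - xs⟫ := hpm xs y (hxs y hyS)
  -- positivity of ρ
  have hxyn : 0 < ‖x - y‖ := norm_pos_iff.mpr (sub_ne_zero.mpr hxy)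
  have hid : (⟪x - y, d⟫ : ℝ) = ‖x - y‖^2 - lam * ⟪x - y, A x - A y⟫ := by
    rw [hd]
    simp only [← real_inner_self_eq_norm_sq, inner_sub_right, real_inner_smul_right]
  have hcs : (⟪x - y, A x - A y⟫ : ℝ) ≤ ‖x - y‖ * ‖A x - A y‖ := real_inner_le_norm _ _
  have hipd : 0 < (⟪x - y, d⟫ : ℝ) := by
    nlinarith [mul_le_mul_of_nonneg_left hcs hlam.le,
      mul_le_mul_of_nonneg_left hls (norm_nonneg (x - y)), hxyn, hμ1,
      mul_pos (show (0:ℝ) < 1 - μ by linarith) (mul_pos hxyn hxyn)]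
  have hdne : d ≠ 0 := by
    intro h; rw [h, inner_zero_right] at hipd; exact lt_irrefl 0 hipd
  have hdn : 0 < ‖d‖^2 := pow_pos (norm_pos_iff.mpr hdne) 2
  have hρpos : 0 < ρ := hρ ▸ div_pos hipd hdn
  have hρd : ρ * ‖d‖^2 = (⟪x - y, d⟫ : ℝ) := by rw [hρ]; field_simp
  -- Step A
  have h1 : (⟪x - (γ*lam*ρ) • A y - xp, xs - xp⟫ : ℝ) ≤ 0 := hproj2 xs hxsS
  have hidA := id1 xp (x - (γ*lam*ρ) • A y) xs
  have e1 := exp1 x (A y) xs (γ*lam*ρ)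
  have e2 := exp1 x (A y) xp (γ*lam*ρ)
  have hsplit : (⟪A y, x - xs⟫ : ℝ) = ⟪A y, x - xp⟫ + ⟪A y, xp - y⟫ + ⟪A y, y - xs⟫ := by
    simp only [← inner_add_right]; congr 1; abel
  have hA : ‖xp - xs‖^2 ≤ ‖x - xs‖^2 - ‖x - xp‖^2
      - 2*(γ*lam*ρ) * (⟪A y, xp - y⟫ + ⟪A y, y - xs⟫) := by
    rw [hsplit] at e1
    linarith [hidA, e1, e2, h1]
  -- Step B : lam * <A y, xp - y> ≥ <d, xp - y>
  have h2 : (⟪x - lam • A x - y, xp - y⟫ : ℝ) ≤ 0 := hproj1 xp hxpS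
  have hv : d = (x - lam • A x - y) + lam • A y := by rw [hd]; module
  have hB : (⟪d, xp - y⟫ : ℝ) ≤ lam * ⟪A y, xp - y⟫ := by
    have : (⟪d, xp - y⟫ : ℝ) = ⟪x - lam • A x - y, xp - y⟫ + lam * ⟪A y, xp - y⟫ := by
      rw [hv, inner_add_left, real_inner_smul_left]
    linarith
  -- Step C
  have hC : (⟪d, xp - y⟫ : ℝ) = ⟪d, xp - x⟫ + ρ * ‖d‖^2 := by
    have h3 : xp - y = (xp - x) + (x - y) := by abel
    have h4 : (⟪d, x - y⟫ : ℝ) = ρ * ‖d‖^2 := by rw [real_inner_comm]; exact hρd.symm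
    rw [h3, inner_add_right, h4]
  -- Step D
  have hD : 0 ≤ ‖x - xp‖^2 + 2*(γ*ρ)*(⟪d, xp - x⟫:ℝ) + (γ*ρ)^2*‖d‖^2 := by
    have he : ‖(xp - x) + (γ*ρ) • d‖^2
        = ‖xp - x‖^2 + 2*(γ*ρ)*(⟪d, xp - x⟫:ℝ) + (γ*ρ)^2*‖d‖^2 := by
      rw [norm_add_sq_real, real_inner_smul_right, norm_smul, Real.norm_eq_abs, mul_pow,
        sq_abs, real_inner_comm (xp - x) d]
      ring
    have hn : ‖xp - x‖ = ‖x - xp‖ := norm_sub_rev _ _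
    rw [hn] at he
    rw [← he]
    positivity
  -- combine
  have hBB : 2*(γ*ρ)*(⟪d, xp - y⟫:ℝ) ≤ 2*(γ*lam*ρ)*(⟪A y, xp - y⟫:ℝ) := by
    nlinarith [mul_le_mul_of_nonneg_left hB (show (0:ℝ) ≤ 2*(γ*ρ) by positivity)]
  have hpos1 : 0 ≤ γ*(2-γ)*(ρ^2*‖d‖^2) :=
    le_of_lt (mul_pos (mul_pos hγ0 (by linarith)) (mul_pos (pow_pos hρpos 2) hdn))
  have hpos2 : 0 ≤ (γ*lam*ρ)*(⟪A y, y - xs⟫:ℝ) :=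
    mul_nonneg (by positivity) hQ
  have hCC : 2*(γ*ρ)*(⟪d, xp - y⟫:ℝ) = 2*(γ*ρ)*(⟪d, xp - x⟫:ℝ) + 2*γ*ρ^2*‖d‖^2 := by
    rw [hC]; ring
  have hsq : ‖xp - xs‖^2 ≤ ‖x - xs‖^2 := by linarith only [hA, hBB, hCC, hD, hpos1, hpos2]
  nlinarith [hsq, norm_nonneg (xp - xs), norm_nonneg (x - xs)]
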